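/- Let X and Y be Banach spaces, C1 ⊆ X relatively norm compact and C2 ⊆ Y weakly precompact (every sequence in C2 has a weakly Cauchy subsequence). Then C1 ⊗ C2 := {x ⊗ y : x ∈ C1, y ∈ C2} is weakly precompact in X ⊗̂π Y. -/

import Mathlib

open Filter Topology NormedSpace
open scoped ENNReal NNReal

/-- `Z`, together with the continuous bilinear map `m`, is (a realization of) the projective
tensor product `X ⊗̂π Y`: the span of elementary tensors is dense, and every continuous bilinear
map into a Banach space lifts to a continuous linear map on `Z` with the same norm. -/
structure IsProjTensorProduct (X Y Z : Type*) [NormedAddCommGroup X] [NormedSpace ℝ X]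
    [NormedAddCommGroup Y] [NormedSpace ℝ Y] [NormedAddCommGroup Z] [NormedSpace ℝ Z]
    (m : X →L[ℝ] Y →L[ℝ] Z) : Prop where
  dense_span : Dense (Submodule.span ℝ {z : Z | ∃ x y, m x y = z} : Set Z)
  lift : ∀ (W : Type) [NormedAddCommGroup W] [NormedSpace ℝ W] [CompleteSpace W]
    (B : X →L[ℝ] Y →L[ℝ] W), ∃ T : Z →L[ℝ] W, ‖T‖ = ‖B‖ ∧ ∀ x y, T (m x y) = B x y

/-- A set is relatively weakly compact if its closure in the weak topology is weakly compact. -/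
def RelWeakCompact (X : Type*) [SeminormedAddCommGroup X] [NormedSpace ℝ X] (A : Set X) : Prop :=
  IsCompact (closure ((toWeakSpace ℝ X) '' A))

/-- A set is relatively norm compact if its norm closure is compact. -/
def RelNormCompact (X : Type*) [SeminormedAddCommGroup X] [NormedSpace ℝ X] (A : Set X) : Prop :=
  IsCompact (closure A)

/-- A sequence is weakly Cauchy if every continuous functional sends it to a convergent sequence. -/
def WeaklyCauchySeq {X : Type*} [SeminormedAddCommGroup X] [NormedSpace ℝ X] (x : ℕ → X) : Prop :=
  ∀ f : X →L[ℝ] ℝ, ∃ l : ℝ, Tendsto (fun n => f (x n)) atTop (nhds l)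

/-- A sequence is weakly null if it converges to `0` in the weak topology. -/
def WeaklyNullSeq {X : Type*} [SeminormedAddCommGroup X] [NormedSpace ℝ X] (x : ℕ → X) : Prop :=
  ∀ f : X →L[ℝ] ℝ, Tendsto (fun n => f (x n)) atTop (nhds 0)

/-- A set is weakly precompact if every sequence in it has a weakly Cauchy subsequence. -/
def WeaklyPrecompact {X : Type*} [SeminormedAddCommGroup X] [NormedSpace ℝ X] (A : Set X) : Prop :=
  ∀ x : ℕ → X, (∀ n, x n ∈ A) → ∃ φ : ℕ → ℕ, StrictMono φ ∧ WeaklyCauchySeq (x ∘ φ)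

/-- A (weakly) compact operator maps the closed unit ball to a relatively (weakly) compact set. -/
def WeaklyCompactOp {X Y : Type*} [SeminormedAddCommGroup X] [NormedSpace ℝ X]
    [SeminormedAddCommGroup Y] [NormedSpace ℝ Y] (T : X →L[ℝ] Y) : Prop :=
  RelWeakCompact Y (T '' Metric.closedBall 0 1)

theorem stmt3 {X Y Z : Type*} [NormedAddCommGroup X] [NormedSpace ℝ X] [CompleteSpace X] [NormedAddCommGroup Y] [NormedSpace ℝ Y] [CompleteSpace Y] [NormedAddCommGroup Z] [NormedSpace ℝ Z] [CompleteSpace Z]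
    (m : X →L[ℝ] Y →L[ℝ] Z) (hm : IsProjTensorProduct X Y Z m)
    (C1 : Set X) (C2 : Set Y) (hC1 : RelNormCompact X C1) (hC2 : WeaklyPrecompact C2) :
    WeaklyPrecompact (Set.image2 (fun x y => m x y) C1 C2) := by
  intro z hz
  simp only [Set.mem_image2] at hz
  choose x hx y hy hxy using hz
  obtain ⟨a, -, φ₁, hφ₁, ha⟩ := hC1.tendsto_subseq (fun n => subset_closure (hx n))
  obtain ⟨φ₂, hφ₂, hyc⟩ := hC2 (y ∘ φ₁) (fun n => hy _)
  refine ⟨φ₁ ∘ φ₂, hφ₁.comp hφ₂, ?_⟩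
  set w : ℕ → Y := fun n => y (φ₁ (φ₂ n)) with hw
  set u : ℕ → X := fun n => x (φ₁ (φ₂ n)) with hu
  -- the sequence w is bounded (Banach–Steinhaus)
  obtain ⟨M, hM⟩ : ∃ M : ℝ, ∀ n, ‖w n‖ ≤ M := by
    have hpt : ∀ f : StrongDual ℝ Y, ∃ C, ∀ n : ℕ,
        ‖(inclusionInDoubleDual ℝ Y (w n)) f‖ ≤ C := by
      intro f
      obtain ⟨l, hl⟩ := hyc f
      obtain ⟨C, hC⟩ := (hl.norm.bddAbove_range)
      exact ⟨C, fun n => hC (Set.mem_range_self n)⟩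
    obtain ⟨M, hM⟩ := banach_steinhaus (E := StrongDual ℝ Y) (F := ℝ)
      (g := fun n => inclusionInDoubleDual ℝ Y (w n)) hpt
    exact ⟨M, fun n =>
      le_trans (le_of_eq ((inclusionInDoubleDualLi ℝ (E := Y)).norm_map (w n)).symm) (hM n)⟩
  have hM0 : 0 ≤ M := le_trans (norm_nonneg _) (hM 0)
  have hau : Tendsto u atTop (nhds a) := ha.comp hφ₂.tendsto_atTop
  intro f
  obtain ⟨l, hl⟩ := hyc (f.comp (m a))
  refine ⟨l, ?_⟩
  have key : ∀ n, f (z (φ₁ (φ₂ n))) = f (m a (w n)) + f (m (u n - a) (w n)) := by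
    intro n
    rw [← hxy (φ₁ (φ₂ n))]
    simp only [map_sub, ContinuousLinearMap.sub_apply, ContinuousLinearMap.coe_sub', Pi.sub_apply, hu, hw]
    ring
  have h2 : Tendsto (fun n => f (m (u n - a) (w n))) atTop (nhds 0) := by
    have hub : Tendsto (fun n => ‖f‖ * ‖m‖ * ‖u n - a‖ * M) atTop (nhds 0) := by
      have : Tendsto (fun n => ‖u n - a‖) atTop (nhds 0) :=
        (tendsto_iff_norm_sub_tendsto_zero.mp hau)
      simpa using (((this.const_mul (‖f‖ * ‖m‖)).mul_const M))
    refine squeeze_zero_norm (fun n => ?_) hub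
    calc ‖f (m (u n - a) (w n))‖ ≤ ‖f‖ * ‖m (u n - a) (w n)‖ := f.le_opNorm _
      _ ≤ ‖f‖ * (‖m‖ * ‖u n - a‖ * ‖w n‖) := by
          gcongr
          exact (m (u n - a)).le_of_opNorm_le (m.le_opNorm _) _
      _ ≤ ‖f‖ * (‖m‖ * ‖u n - a‖ * M) := by
          gcongr
          · exact hM n
      _ = ‖f‖ * ‖m‖ * ‖u n - a‖ * M := by ring
  have h1 : Tendsto (fun n => f (m a (w n))) atTop (nhds l) := hl
  have := h1.add h2
  simp only [add_zero] at this
  exact this.congr (fun n => (key n).symm)
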